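/- Let Δ be a pure d-dimensional simplicial complex and 0 ≤ i < d. Then the (i, d)-incidence complex H_Δ(i, d) of a simplicial forest Δ is itself a simplicial forest. -/

import Mathlib

open Finset

/-- A facet `F` of the family `𝓖` (of facets of a simplicial complex) is a leaf. -/
def IsLeaf {V : Type*} [DecidableEq V] (𝓖 : Finset (Finset V)) (F : Finset V) : Prop :=
  F ∈ 𝓖 ∧ ((∀ F' ∈ 𝓖, F' = F) ∨
    ∃ G ∈ 𝓖, G ≠ F ∧ ∀ F' ∈ 𝓖, F' ≠ F → F' ∩ F ⊆ G ∩ F)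

/-- A family of facets is a simplicial forest if every nonempty subfamily has a leaf. -/
def IsForest {V : Type*} [DecidableEq V] (𝓕 : Finset (Finset V)) : Prop :=
  ∀ 𝓖 ⊆ 𝓕, 𝓖.Nonempty → ∃ F, IsLeaf 𝓖 F

lemma powersetCard_inter_eq {V : Type*} [DecidableEq V] (k : ℕ) (A B : Finset V) :
    A.powersetCard k ∩ B.powersetCard k = (A ∩ B).powersetCard k := by
  ext S
  simp only [mem_inter, mem_powersetCard, subset_inter_iff]
  tauto

lemma pc_inj {V : Type*} [DecidableEq V] {k : ℕ} {A B : Finset V}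
    (hA : k ≤ A.card) (hB : k ≤ B.card) (hk : 0 < k)
    (h : A.powersetCard k = B.powersetCard k) : A = B := by
  have key : ∀ {X Y : Finset V}, k ≤ Y.card → X.powersetCard k = Y.powersetCard k → Y ⊆ X := by
    intro X Y hY hXY x hx
    obtain ⟨S, hS1, hS2, hS3⟩ := Finset.exists_subsuperset_card_eq
      (Finset.singleton_subset_iff.mpr hx) (by simpa using Nat.succ_le_of_lt hk) hY
    have : S ∈ X.powersetCard k := by rw [hXY]; exact Finset.mem_powersetCard.mpr ⟨hS2, hS3⟩
    exact (Finset.mem_powersetCard.mp this).1 (hS1 (Finset.mem_singleton_self x))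
  exact Finset.Subset.antisymm (key hA h.symm) (key hB h)

/-- For a pure `d`-dimensional simplicial forest `Δ` (with facet family `𝓕`, every facet
of cardinality `d + 1`) and `i < d`, the `(i, d)`-incidence complex — whose vertices are the
`i`-faces of `Δ` and whose facets are, for each facet `F` of `Δ`, the set of `(i+1)`-subsets
of `F` — is itself a simplicial forest. -/
theorem stmt7 {V : Type*} [DecidableEq V] {d i : ℕ} (hid : i < d)
    (𝓕 : Finset (Finset V)) (hforest : IsForest 𝓕)
    (hpure : ∀ F ∈ 𝓕, F.card = d + 1) :
    IsForest (𝓕.image fun F => F.powersetCard (i + 1)) := by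
  intro 𝓖' h𝓖' ⟨X0, hX0⟩
  set 𝓖 : Finset (Finset V) := 𝓕.filter (fun F => F.powersetCard (i + 1) ∈ 𝓖') with h𝓖def
  have hsub : 𝓖 ⊆ 𝓕 := filter_subset _ _
  have hcard : ∀ F ∈ 𝓖, (i + 1) ≤ F.card := fun F hF => by
    rw [hpure F (hsub hF)]; omega
  have hmem : ∀ X ∈ 𝓖', ∃ F ∈ 𝓖, F.powersetCard (i + 1) = X := by
    intro X hX
    obtain ⟨F, hF, hFX⟩ := mem_image.mp (h𝓖' hX)
    exact ⟨F, mem_filter.mpr ⟨hF, by rw [hFX]; exact hX⟩, hFX⟩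
  obtain ⟨F0, hF0, _⟩ := hmem X0 hX0
  obtain ⟨F, ⟨hF𝓖, hleaf⟩⟩ := hforest 𝓖 hsub ⟨F0, hF0⟩
  refine ⟨F.powersetCard (i + 1), (mem_filter.mp hF𝓖).2, ?_⟩
  rcases hleaf with h1 | ⟨G, hG, hGF, hG2⟩
  · left
    intro X hX
    obtain ⟨F', hF', rfl⟩ := hmem X hX
    rw [h1 F' hF']
  · right
    refine ⟨G.powersetCard (i + 1), (mem_filter.mp hG).2, ?_, ?_⟩
    · intro h
      exact hGF (pc_inj (hcard G hG) (hcard F hF𝓖) (Nat.succ_pos i) h)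
    · intro X hX hXne
      obtain ⟨F', hF', rfl⟩ := hmem X hX
      have hF'F : F' ≠ F := fun h => hXne (by rw [h])
      rw [powersetCard_inter_eq, powersetCard_inter_eq]
      exact Finset.powersetCard_mono (hG2 F' hF' hF'F)
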